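/- Witnesses' theorem for since: let T be an Ax-consistent set of PTEL formulas, k ∈ ℕ, B = (β_0,…,β_k) a sequence of formulas and X = (X_1,…,X_k) a sequence of operators from {K_a : a an agent} ∪ {◯, ●}. If T ∪ { Φ_{k,B,X}(¬(α S β)) } is inconsistent, then there exists i_0 ∈ ℕ such that T ∪ { ¬ Φ_{k,B,X}( ¬( (⋀_{l=0}^{i_0−1} ●^l α) ∧ (⋀_{l=0}^{i_0} ¬●^l(α ∧ ¬α)) ∧ ●^{i_0} β) ) } is consistent, where Φ_{k,B,X}(τ) denotes the k-nested implication defined by Φ_{0,B,X}(τ) = β_0 → τ and Φ_{k,B,X}(τ) = β_k → X_k Φ_{k−1,(β_0,…,β_{k−1}),(X_1,…,X_{k−1})}(τ) for k ≥ 1. -/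
import Mathlib


namespace PTEL

/-- Formulas of the probabilistic temporal epistemic logic PTEL with `m` agents
(agents are `Fin m`).  Propositional letters are `atom n` (`n : ℕ`) together with
the special letters `act a` (the letter `A_a`, "agent `a` is active"). -/
inductive Frm (m : ℕ) : Type where
  | atom   : ℕ → Frm m
  | act    : Fin m → Frm m
  | neg    : Frm m → Frm m
  | and    : Frm m → Frm m → Frm m
  | next   : Frm m → Frm m
  | until  : Frm m → Frm m → Frm m
  | prev   : Frm m → Frm m
  | since  : Frm m → Frm m → Frm m
  | know   : Fin m → Frm m → Frm m
  | common : Frm m → Frm m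
  | pge    : ℚ → Frm m → Frm m            -- P_{≥ s} α
  | page   : Fin m → ℚ → Frm m → Frm m    -- P_{a, ≥ s} α

namespace Frm

variable {m : ℕ}

/-- `α → β` defined classically as `¬(α ∧ ¬β)`. -/
def imp (α β : Frm m) : Frm m := Frm.neg (Frm.and α (Frm.neg β))

/-- `α ∨ β` defined classically. -/
def orf (α β : Frm m) : Frm m := Frm.neg (Frm.and (Frm.neg α) (Frm.neg β))

/-- `α ↔ β`. -/
def ifff (α β : Frm m) : Frm m := Frm.and (imp α β) (imp β α)

/-- A fixed tautology `⊤`. -/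
def verum : Frm m := imp (Frm.atom 0) (Frm.atom 0)

/-- `◯^n α`. -/
def nextPow : ℕ → Frm m → Frm m
  | 0, α => α
  | n + 1, α => Frm.next (nextPow n α)

/-- `●^n α`. -/
def prevPow : ℕ → Frm m → Frm m
  | 0, α => α
  | n + 1, α => Frm.prev (prevPow n α)

/-- `⋀_{l=0}^{n-1} f l` (the empty conjunction is `⊤`). -/
def conjBelow (f : ℕ → Frm m) : ℕ → Frm m
  | 0 => verum
  | n + 1 => Frm.and (conjBelow f n) (f n)

/-- `G α = ⋀_{a ∈ Agents} K_a α` (everybody knows). -/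
def ek (α : Frm m) : Frm m :=
  (List.finRange m).foldr (fun a acc => Frm.and (Frm.know a α) acc) verum

/-- `G^n α` where `G^0 α = α` and `G^{n+1} α = G (G^n α)`. -/
def ekPow : ℕ → Frm m → Frm m
  | 0, α => α
  | n + 1, α => ek (ekPow n α)

/-- `◇ α = (α → α) U α`. -/
def sometime (α : Frm m) : Frm m := Frm.until (imp α α) α

/-- `□ α = ¬ ◇ ¬ α`. -/
def always (α : Frm m) : Frm m := Frm.neg (sometime (Frm.neg α))

/-- `P_{< s} α  =  ¬ P_{≥ s} α`. -/
def plt (s : ℚ) (α : Frm m) : Frm m := Frm.neg (Frm.pge s α)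

/-- `P_{≤ s} α  =  P_{≥ 1-s} ¬α`. -/
def ple (s : ℚ) (α : Frm m) : Frm m := Frm.pge (1 - s) (Frm.neg α)

/-- `P_{a, < s} α  =  ¬ P_{a, ≥ s} α`. -/
def palt (a : Fin m) (s : ℚ) (α : Frm m) : Frm m := Frm.neg (Frm.page a s α)

/-- `P_{a, ≤ s} α  =  P_{a, ≥ 1-s} ¬α`. -/
def pale (a : Fin m) (s : ℚ) (α : Frm m) : Frm m := Frm.page a (1 - s) (Frm.neg α)

end Frm

/-- The unary operators `K_a`, `◯`, `●` used in `k`-nested implications. -/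
inductive Op (m : ℕ) : Type where
  | know : Fin m → Op m
  | next : Op m
  | prev : Op m

def Op.app {m : ℕ} : Op m → Frm m → Frm m
  | .know a, α => Frm.know a α
  | .next, α => Frm.next α
  | .prev, α => Frm.prev α

/-- The `k`-nested implication `Φ_{k,B,X}(τ)`.  Here `β0` is the innermost formula
`β_0`, and `L = [(β_k, X_k), (β_{k-1}, X_{k-1}), …, (β_1, X_1)]` lists the remaining
formulas of `B` paired with the operators of `X`, from the outermost inwards:
`Φ_{0,(β_0),()}(τ) = β_0 → τ` and
`Φ_{k,B,X}(τ) = β_k → X_k Φ_{k-1,(β_0,…,β_{k-1}),(X_1,…,X_{k-1})}(τ)` for `k ≥ 1`. -/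
def KNI {m : ℕ} (β0 : Frm m) : List (Frm m × Op m) → Frm m → Frm m
  | [], τ => Frm.imp β0 τ
  | p :: L, τ => Frm.imp p.1 (Op.app p.2 (KNI β0 L τ))

/-- Instances of classical propositional tautologies: formulas true under every
Boolean valuation that respects `¬` and `∧`. -/
def IsTautology {m : ℕ} (φ : Frm m) : Prop :=
  ∀ v : Frm m → Bool,
    (∀ α, v (Frm.neg α) = !(v α)) →
    (∀ α β, v (Frm.and α β) = (v α && v β)) →
    v φ = true

/-- `q ∈ [0,1] ∩ ℚ`. -/
def InUnit (q : ℚ) : Prop := 0 ≤ q ∧ q ≤ 1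

/-- Derivability in the axiomatic system `Ax` of PTEL.  Premises of the
necessitation rules must be theorems (derivable from `∅`); the rules
`ruleUntil`, `ruleSince`, `ruleCommon`, `ruleArch`, `ruleArchA` are the
infinitary rules RU, RS, RC, RGA, RA formulated via `k`-nested implications. -/
inductive Deriv {m : ℕ} : Set (Frm m) → Frm m → Prop where
  -- I. propositional part
  | hyp {T : Set (Frm m)} {φ} (h : φ ∈ T) : Deriv T φ
  | tauto {T : Set (Frm m)} {φ} (h : IsTautology φ) : Deriv T φ
  | mp {T : Set (Frm m)} {φ ψ} (h1 : Deriv T (Frm.imp φ ψ)) (h2 : Deriv T φ) : Deriv T ψ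
  -- II. temporal axioms and rules
  | axNextNeg {T : Set (Frm m)} (α) :
      Deriv T (Frm.ifff (Frm.neg (Frm.next α)) (Frm.next (Frm.neg α)))
  | axNextImp {T : Set (Frm m)} (α β) :
      Deriv T (Frm.imp (Frm.next (Frm.imp α β)) (Frm.imp (Frm.next α) (Frm.next β)))
  | axUntilNext {T : Set (Frm m)} (α β) :
      Deriv T (Frm.ifff (Frm.until α β)
        (Frm.orf β (Frm.and α (Frm.next (Frm.until α β)))))
  | axUntilSometime {T : Set (Frm m)} (α β) :
      Deriv T (Frm.imp (Frm.until α β) (Frm.sometime β))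
  | axPrevNeg {T : Set (Frm m)} (α) :
      Deriv T (Frm.imp (Frm.neg (Frm.prev (Frm.neg α))) (Frm.prev α))
  | axPrevImp {T : Set (Frm m)} (α β) :
      Deriv T (Frm.imp (Frm.prev (Frm.imp α β)) (Frm.imp (Frm.prev α) (Frm.prev β)))
  | axPrevAnd {T : Set (Frm m)} (α β) :
      Deriv T (Frm.imp (Frm.and (Frm.prev α) (Frm.prev β)) (Frm.prev (Frm.and α β)))
  | axNextPrev {T : Set (Frm m)} (α) :
      Deriv T (Frm.ifff (Frm.next (Frm.prev α)) α)
  | axNextPrevC1 {T : Set (Frm m)} (α) :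
      Deriv T (Frm.imp (Frm.next (Frm.prev α)) (Frm.prev (Frm.next α)))
  | axNextPrevC2 {T : Set (Frm m)} (α γ) :
      Deriv T (Frm.imp (Frm.neg (Frm.prev (Frm.and γ (Frm.neg γ))))
        (Frm.ifff (Frm.next (Frm.prev α)) (Frm.prev (Frm.next α))))
  | axSincePrev {T : Set (Frm m)} (α β) :
      Deriv T (Frm.ifff (Frm.since α β)
        (Frm.orf β (Frm.and (Frm.neg (Frm.prev (Frm.and α (Frm.neg α))))
          (Frm.and α (Frm.prev (Frm.since α β))))))
  | axOncePrev {T : Set (Frm m)} (β) :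
      Deriv T (Frm.since (Frm.imp (Frm.prev β) (Frm.prev β)) (Frm.prev β))
  | ruleNextNec {T : Set (Frm m)} {α} (h : Deriv ∅ α) : Deriv T (Frm.next α)
  | rulePrevNec {T : Set (Frm m)} {α} (h : Deriv ∅ α) : Deriv T (Frm.prev α)
  | ruleUntil {T : Set (Frm m)} {β0 : Frm m} {L : List (Frm m × Op m)} {α β : Frm m}
      (h : ∀ i : ℕ, Deriv T (KNI β0 L (Frm.neg
        (Frm.and (Frm.conjBelow (fun l => Frm.nextPow l α) i) (Frm.nextPow i β))))) :
      Deriv T (KNI β0 L (Frm.neg (Frm.until α β)))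
  | ruleSince {T : Set (Frm m)} {β0 : Frm m} {L : List (Frm m × Op m)} {α β : Frm m}
      (h : ∀ i : ℕ, Deriv T (KNI β0 L (Frm.neg
        (Frm.and (Frm.conjBelow (fun l => Frm.prevPow l α) i)
          (Frm.and (Frm.conjBelow (fun l => Frm.neg (Frm.prevPow l (Frm.and α (Frm.neg α)))) (i + 1))
            (Frm.prevPow i β)))))) :
      Deriv T (KNI β0 L (Frm.neg (Frm.since α β)))
  -- III. epistemic axioms and rules
  | axKImp {T : Set (Frm m)} (a : Fin m) (α β) :
      Deriv T (Frm.imp (Frm.know a (Frm.imp α β)) (Frm.imp (Frm.know a α) (Frm.know a β)))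
  | axKRefl {T : Set (Frm m)} (a : Fin m) (α) :
      Deriv T (Frm.imp (Frm.act a) (Frm.imp (Frm.know a α) α))
  | axKAware {T : Set (Frm m)} (a : Fin m) :
      Deriv T (Frm.imp (Frm.act a) (Frm.know a (Frm.act a)))
  | axKDead {T : Set (Frm m)} (a : Fin m) (α) :
      Deriv T (Frm.imp (Frm.neg (Frm.act a)) (Frm.know a (Frm.and α (Frm.neg α))))
  | axKSymm {T : Set (Frm m)} (a : Fin m) (α) :
      Deriv T (Frm.imp (Frm.know a (Frm.neg α)) (Frm.know a (Frm.neg (Frm.know a α))))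
  | axKTrans {T : Set (Frm m)} (a : Fin m) (α) :
      Deriv T (Frm.imp (Frm.know a α) (Frm.know a (Frm.know a α)))
  | axCommon {T : Set (Frm m)} (α) (n : ℕ) :
      Deriv T (Frm.imp (Frm.common α) (Frm.ekPow n α))
  | ruleKNec {T : Set (Frm m)} (a : Fin m) {α} (h : Deriv ∅ α) : Deriv T (Frm.know a α)
  | ruleCommon {T : Set (Frm m)} {β0 : Frm m} {L : List (Frm m × Op m)} {α : Frm m}
      (h : ∀ i : ℕ, Deriv T (KNI β0 L (Frm.ekPow i α))) :
      Deriv T (KNI β0 L (Frm.common α))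
  -- IV. probabilities on runs
  | axPge0 {T : Set (Frm m)} (α) : Deriv T (Frm.pge 0 α)
  | axPleLt {T : Set (Frm m)} (α) {r t : ℚ} (hr : InUnit r) (ht : InUnit t) (h : r < t) :
      Deriv T (Frm.imp (Frm.ple r α) (Frm.plt t α))
  | axPltLe {T : Set (Frm m)} (α) {t : ℚ} (ht : InUnit t) :
      Deriv T (Frm.imp (Frm.plt t α) (Frm.ple t α))
  | axPAdd {T : Set (Frm m)} (α β) {r t : ℚ} (hr : InUnit r) (ht : InUnit t) :
      Deriv T (Frm.imp
        (Frm.and (Frm.pge r α) (Frm.and (Frm.pge t β) (Frm.pge 1 (Frm.neg (Frm.and α β)))))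
        (Frm.pge (min 1 (r + t)) (Frm.orf α β)))
  | axPAdd2 {T : Set (Frm m)} (α β) {r t : ℚ} (hr : InUnit r) (ht : InUnit t)
      (h : r + t ≤ 1) :
      Deriv T (Frm.imp (Frm.and (Frm.ple r α) (Frm.plt t α)) (Frm.plt (r + t) (Frm.orf α β)))
  | axPPrev {T : Set (Frm m)} (α) :
      Deriv T (Frm.pge 1 (Frm.prev (Frm.and α (Frm.neg α))))
  | rulePNec {T : Set (Frm m)} {α} (h : Deriv ∅ α) : Deriv T (Frm.pge 1 α)
  | ruleArch {T : Set (Frm m)} {β0 : Frm m} {L : List (Frm m × Op m)} {α : Frm m} {r : ℚ}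
      (hr0 : 0 < r) (hr1 : r ≤ 1)
      (h : ∀ i : ℕ, 1 / r ≤ (i : ℚ) → Deriv T (KNI β0 L (Frm.pge (r - 1 / (i : ℚ)) α))) :
      Deriv T (KNI β0 L (Frm.pge r α))
  -- V. probabilities on possible worlds
  | axPAge0 {T : Set (Frm m)} (a : Fin m) (α) : Deriv T (Frm.page a 0 α)
  | axPALeLt {T : Set (Frm m)} (a : Fin m) (α) {r t : ℚ} (hr : InUnit r) (ht : InUnit t)
      (h : r < t) :
      Deriv T (Frm.imp (Frm.pale a r α) (Frm.palt a t α))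
  | axPALtLe {T : Set (Frm m)} (a : Fin m) (α) {t : ℚ} (ht : InUnit t) :
      Deriv T (Frm.imp (Frm.palt a t α) (Frm.pale a t α))
  | axPAAdd {T : Set (Frm m)} (a : Fin m) (α β) {r t : ℚ} (hr : InUnit r) (ht : InUnit t) :
      Deriv T (Frm.imp
        (Frm.and (Frm.page a r α)
          (Frm.and (Frm.page a t β) (Frm.page a 1 (Frm.neg (Frm.and α β)))))
        (Frm.page a (min 1 (r + t)) (Frm.orf α β)))
  | axPAAdd2 {T : Set (Frm m)} (a : Fin m) (α β) {r t : ℚ} (hr : InUnit r) (ht : InUnit t)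
      (h : r + t ≤ 1) :
      Deriv T (Frm.imp (Frm.and (Frm.pale a r α) (Frm.palt a t α))
        (Frm.palt a (r + t) (Frm.orf α β)))
  | rulePANec {T : Set (Frm m)} (a : Fin m) {α} (h : Deriv ∅ α) : Deriv T (Frm.page a 1 α)
  | ruleArchA {T : Set (Frm m)} (a : Fin m) {β0 : Frm m} {L : List (Frm m × Op m)}
      {α : Frm m} {r : ℚ} (hr0 : 0 < r) (hr1 : r ≤ 1)
      (h : ∀ i : ℕ, 1 / r ≤ (i : ℚ) →
        Deriv T (KNI β0 L (Frm.page a (r - 1 / (i : ℚ)) α))) :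
      Deriv T (KNI β0 L (Frm.page a r α))

/-- A theory is inconsistent if it derives every formula. -/
def Inconsistent {m : ℕ} (T : Set (Frm m)) : Prop := ∀ φ : Frm m, Deriv T φ

def Consistent {m : ℕ} (T : Set (Frm m)) : Prop := ¬ Inconsistent T

def MaximalConsistent {m : ℕ} (T : Set (Frm m)) : Prop :=
  Consistent T ∧ ∀ S : Set (Frm m), T ⊂ S → ¬ Consistent S

/-! ### Semantics -/

/-- A run assigns to each moment the set of propositional letters true at it
(`Sum.inl n` is the letter `atom n`, `Sum.inr a` is the letter `A_a`). -/
abbrev Run (m : ℕ) : Type := ℕ → Set (ℕ ⊕ Fin m)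

/-- A finitely additive probability measure defined on an algebra of subsets of `X`. -/
structure FinAddProb (X : Type) where
  sets : Set (Set X)
  univ_mem : Set.univ ∈ sets
  compl_mem : ∀ A ∈ sets, Aᶜ ∈ sets
  union_mem : ∀ A ∈ sets, ∀ B ∈ sets, A ∪ B ∈ sets
  mu : Set X → ℝ
  mu_nonneg : ∀ A ∈ sets, 0 ≤ mu A
  mu_univ : mu Set.univ = 1
  mu_add : ∀ A ∈ sets, ∀ B ∈ sets, Disjoint A B → mu (A ∪ B) = mu A + mu B

/-- A finitely additive probability space on a nonempty subset (`carrier`) of `X`,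
with an algebra of subsets of the carrier. -/
structure SubFinAddProb (X : Type) where
  carrier : Set X
  carrier_nonempty : carrier.Nonempty
  sets : Set (Set X)
  sets_sub : ∀ A ∈ sets, A ⊆ carrier
  carrier_mem : carrier ∈ sets
  compl_mem : ∀ A ∈ sets, carrier \ A ∈ sets
  union_mem : ∀ A ∈ sets, ∀ B ∈ sets, A ∪ B ∈ sets
  mu : Set X → ℝ
  mu_nonneg : ∀ A ∈ sets, 0 ≤ mu A
  mu_carrier : mu carrier = 1
  mu_add : ∀ A ∈ sets, ∀ B ∈ sets, Disjoint A B → mu (A ∪ B) = mu A + mu B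

/-- A PTEL Kripke model. -/
structure Model (m : ℕ) where
  runs : Set (Run m)
  runs_nonempty : runs.Nonempty
  /-- epistemic accessibility relations on possible worlds (pairs run/time) -/
  acc : Fin m → (↥runs × ℕ) → (↥runs × ℕ) → Prop
  acc_symm : ∀ a w w', acc a w w' → acc a w' w
  acc_trans : ∀ a w w' w'', acc a w w' → acc a w' w'' → acc a w w''
  /-- agent `a` is inactive at `w` iff no world is accessible from `w` -/
  inactive_iff : ∀ (a : Fin m) (w : ↥runs × ℕ),
    Sum.inr a ∉ w.1.1 w.2 ↔ ∀ w', ¬ acc a w w'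
  /-- accessibility is reflexive at worlds where the agent is active -/
  acc_refl : ∀ (a : Fin m) (w : ↥runs × ℕ), Sum.inr a ∈ w.1.1 w.2 → acc a w w
  /-- the probability on runs associated to each possible world -/
  runProb : (↥runs × ℕ) → FinAddProb ↥runs
  /-- the agents' probability spaces on possible worlds -/
  agentProb : Fin m → (↥runs × ℕ) → SubFinAddProb (↥runs × ℕ)

abbrev Model.World {m : ℕ} (M : Model m) : Type := ↥M.runs × ℕ

/-- Satisfaction of a formula at a possible world of a model.  Common knowledge is
interpreted via reachability (the equivalent formulation of `(r,n) ⊨ C β`). -/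
def Sat {m : ℕ} (M : Model m) : Frm m → M.World → Prop
  | .atom n, w => Sum.inl n ∈ w.1.1 w.2
  | .act a, w => Sum.inr a ∈ w.1.1 w.2
  | .neg α, w => ¬ Sat M α w
  | .and α β, w => Sat M α w ∧ Sat M β w
  | .next α, w => Sat M α (w.1, w.2 + 1)
  | .until α β, w => ∃ j, w.2 ≤ j ∧ Sat M β (w.1, j) ∧
      ∀ k, w.2 ≤ k → k < j → Sat M α (w.1, k)
  | .prev α, w => w.2 = 0 ∨ ∃ n, w.2 = n + 1 ∧ Sat M α (w.1, n)
  | .since α β, w => ∃ j, j ≤ w.2 ∧ Sat M β (w.1, j) ∧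
      ∀ k, j < k → k ≤ w.2 → Sat M α (w.1, k)
  | .know a α, w => ∀ w', M.acc a w w' → Sat M α w'
  | .common α, w => ∀ w', Relation.ReflTransGen (fun u v => ∃ a, M.acc a u v) w w' →
      Sat M α w'
  | .pge s α, w => (s : ℝ) ≤ (M.runProb w).mu {r : ↥M.runs | Sat M α (r, 0)}
  | .page a s α, w => (s : ℝ) ≤ (M.agentProb a w).mu
      {w' : M.World | w' ∈ (M.agentProb a w).carrier ∧ Sat M α w'}

/-- A model is measurable if all definable sets of runs / of possible worlds are
measurable. -/
def Model.Measurable {m : ℕ} (M : Model m) : Prop :=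
  ∀ (β : Frm m) (w : M.World),
    {r : ↥M.runs | Sat M β (r, 0)} ∈ (M.runProb w).sets ∧
    ∀ a : Fin m,
      {w' : M.World | w' ∈ (M.agentProb a w).carrier ∧ Sat M β w'} ∈ (M.agentProb a w).sets

/-- A set of formulas is satisfiable if it holds at a possible world of some
measurable model. -/
def SatisfiableSet {m : ℕ} (T : Set (Frm m)) : Prop :=
  ∃ M : Model m, M.Measurable ∧ ∃ w : M.World, ∀ φ ∈ T, Sat M φ w

end PTEL

namespace PTEL

section Aux

variable {m : ℕ}

lemma taut_weaken (θ φ : Frm m) : IsTautology (Frm.imp φ (Frm.imp θ φ)) := by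
  intro v hn ha
  simp only [Frm.imp, hn, ha]
  cases v φ <;> cases v θ <;> simp

lemma taut_id (θ : Frm m) : IsTautology (Frm.imp θ θ) := by
  intro v hn ha
  simp only [Frm.imp, hn, ha]
  cases v θ <;> simp

lemma taut_mp2 (θ φ ψ : Frm m) :
    IsTautology (Frm.imp (Frm.imp θ (Frm.imp φ ψ))
      (Frm.imp (Frm.imp θ φ) (Frm.imp θ ψ))) := by
  intro v hn ha
  simp only [Frm.imp, hn, ha]
  cases v θ <;> cases v φ <;> cases v ψ <;> simp

lemma taut_negelim (φ : Frm m) :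
    IsTautology (Frm.imp (Frm.imp (Frm.neg φ) φ) φ) := by
  intro v hn ha
  simp only [Frm.imp, hn, ha]
  cases v φ <;> simp

lemma taut_uncurry (A B C : Frm m) :
    IsTautology (Frm.imp (Frm.imp A (Frm.imp B C)) (Frm.imp (Frm.and A B) C)) := by
  intro v hn ha
  simp only [Frm.imp, hn, ha]
  cases v A <;> cases v B <;> cases v C <;> simp

lemma taut_curry (A B C : Frm m) :
    IsTautology (Frm.imp (Frm.imp (Frm.and A B) C) (Frm.imp A (Frm.imp B C))) := by
  intro v hn ha
  simp only [Frm.imp, hn, ha]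
  cases v A <;> cases v B <;> cases v C <;> simp

lemma weaken {T : Set (Frm m)} {θ φ : Frm m} (h : Deriv T φ) :
    Deriv T (Frm.imp θ φ) :=
  Deriv.mp (Deriv.tauto (taut_weaken θ φ)) h

/-- Outermost formula of the shifted k-nested implication. -/
def shiftB0 (θ β0 : Frm m) : List (Frm m × Op m) → Frm m
  | [] => Frm.and θ β0
  | _ :: _ => β0

/-- Shifted list for the k-nested implication: conjoin `θ` to the outermost antecedent. -/
def shiftL (θ : Frm m) : List (Frm m × Op m) → List (Frm m × Op m)
  | [] => []
  | p :: rest => (Frm.and θ p.1, p.2) :: rest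

lemma toShift {T : Set (Frm m)} {θ β0 : Frm m} {L : List (Frm m × Op m)} {τ : Frm m}
    (h : Deriv T (Frm.imp θ (KNI β0 L τ))) :
    Deriv T (KNI (shiftB0 θ β0 L) (shiftL θ L) τ) := by
  cases L with
  | nil =>
      exact Deriv.mp (Deriv.tauto (taut_uncurry θ β0 τ)) h
  | cons p rest =>
      exact Deriv.mp (Deriv.tauto (taut_uncurry θ p.1 _)) h

lemma fromShift {T : Set (Frm m)} {θ β0 : Frm m} {L : List (Frm m × Op m)} {τ : Frm m}
    (h : Deriv T (KNI (shiftB0 θ β0 L) (shiftL θ L) τ)) :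
    Deriv T (Frm.imp θ (KNI β0 L τ)) := by
  cases L with
  | nil =>
      exact Deriv.mp (Deriv.tauto (taut_curry θ β0 τ)) h
  | cons p rest =>
      exact Deriv.mp (Deriv.tauto (taut_curry θ p.1 _)) h

/-- Deduction theorem for `Ax`. -/
lemma ded {T : Set (Frm m)} {θ φ : Frm m} (h : Deriv (insert θ T) φ) :
    Deriv T (Frm.imp θ φ) := by
  have key : ∀ (S : Set (Frm m)) (ψ : Frm m), Deriv S ψ → S = insert θ T →
      Deriv T (Frm.imp θ ψ) := by
    intro S ψ h
    induction h with
    | @hyp _ φ hmem =>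
        intro hS
        rw [hS, Set.mem_insert_iff] at hmem
        rcases hmem with rfl | hmem
        · exact Deriv.tauto (taut_id _)
        · exact weaken (Deriv.hyp hmem)
    | tauto ht => exact fun _ => weaken (Deriv.tauto ht)
    | mp h1 h2 ih1 ih2 =>
        intro hS
        exact Deriv.mp (Deriv.mp (Deriv.tauto (taut_mp2 _ _ _)) (ih1 hS)) (ih2 hS)
    | axNextNeg α => exact fun _ => weaken (Deriv.axNextNeg α)
    | axNextImp α β => exact fun _ => weaken (Deriv.axNextImp α β)
    | axUntilNext α β => exact fun _ => weaken (Deriv.axUntilNext α β)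
    | axUntilSometime α β => exact fun _ => weaken (Deriv.axUntilSometime α β)
    | axPrevNeg α => exact fun _ => weaken (Deriv.axPrevNeg α)
    | axPrevImp α β => exact fun _ => weaken (Deriv.axPrevImp α β)
    | axPrevAnd α β => exact fun _ => weaken (Deriv.axPrevAnd α β)
    | axNextPrev α => exact fun _ => weaken (Deriv.axNextPrev α)
    | axNextPrevC1 α => exact fun _ => weaken (Deriv.axNextPrevC1 α)
    | axNextPrevC2 α γ => exact fun _ => weaken (Deriv.axNextPrevC2 α γ)
    | axSincePrev α β => exact fun _ => weaken (Deriv.axSincePrev α β)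
    | axOncePrev β => exact fun _ => weaken (Deriv.axOncePrev β)
    | ruleNextNec h => exact fun _ => weaken (Deriv.ruleNextNec h)
    | rulePrevNec h => exact fun _ => weaken (Deriv.rulePrevNec h)
    | ruleUntil h ih =>
        intro hS
        exact fromShift (Deriv.ruleUntil (fun i => toShift (ih i hS)))
    | ruleSince h ih =>
        intro hS
        exact fromShift (Deriv.ruleSince (fun i => toShift (ih i hS)))
    | axKImp a α β => exact fun _ => weaken (Deriv.axKImp a α β)
    | axKRefl a α => exact fun _ => weaken (Deriv.axKRefl a α)
    | axKAware a => exact fun _ => weaken (Deriv.axKAware a)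
    | axKDead a α => exact fun _ => weaken (Deriv.axKDead a α)
    | axKSymm a α => exact fun _ => weaken (Deriv.axKSymm a α)
    | axKTrans a α => exact fun _ => weaken (Deriv.axKTrans a α)
    | axCommon α n => exact fun _ => weaken (Deriv.axCommon α n)
    | ruleKNec a h => exact fun _ => weaken (Deriv.ruleKNec a h)
    | ruleCommon h ih =>
        intro hS
        exact fromShift (Deriv.ruleCommon (fun i => toShift (ih i hS)))
    | axPge0 α => exact fun _ => weaken (Deriv.axPge0 α)
    | axPleLt α hr ht hlt => exact fun _ => weaken (Deriv.axPleLt α hr ht hlt)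
    | axPltLe α ht => exact fun _ => weaken (Deriv.axPltLe α ht)
    | axPAdd α β hr ht => exact fun _ => weaken (Deriv.axPAdd α β hr ht)
    | axPAdd2 α β hr ht hle => exact fun _ => weaken (Deriv.axPAdd2 α β hr ht hle)
    | axPPrev α => exact fun _ => weaken (Deriv.axPPrev α)
    | rulePNec h => exact fun _ => weaken (Deriv.rulePNec h)
    | ruleArch hr0 hr1 h ih =>
        intro hS
        exact fromShift (Deriv.ruleArch hr0 hr1 (fun i hi => toShift (ih i hi hS)))
    | axPAge0 a α => exact fun _ => weaken (Deriv.axPAge0 a α)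
    | axPALeLt a α hr ht hlt => exact fun _ => weaken (Deriv.axPALeLt a α hr ht hlt)
    | axPALtLe a α ht => exact fun _ => weaken (Deriv.axPALtLe a α ht)
    | axPAAdd a α β hr ht => exact fun _ => weaken (Deriv.axPAAdd a α β hr ht)
    | axPAAdd2 a α β hr ht hle => exact fun _ => weaken (Deriv.axPAAdd2 a α β hr ht hle)
    | rulePANec a h => exact fun _ => weaken (Deriv.rulePANec a h)
    | ruleArchA a hr0 hr1 h ih =>
        intro hS
        exact fromShift (Deriv.ruleArchA a hr0 hr1 (fun i hi => toShift (ih i hi hS)))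
  exact key _ _ h rfl

end Aux

/-- **Witnesses' theorem for `S`**: if `T` is consistent and
`T ∪ {Φ_{k,B,X}(¬(α S β))}` is inconsistent, then for some `i₀`
`T ∪ {¬Φ_{k,B,X}(¬((⋀_{l<i₀} ●^l α) ∧ (⋀_{l≤i₀} ¬●^l(α∧¬α)) ∧ ●^{i₀} β))}`
is consistent. -/
theorem witnesses_since {m : ℕ} (T : Set (Frm m)) (hT : Consistent T)
    (β0 : Frm m) (L : List (Frm m × Op m)) (α β : Frm m)
    (h : ¬ Consistent (insert (KNI β0 L (Frm.neg (Frm.since α β))) T)) :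
    ∃ i0 : ℕ, Consistent (insert
      (Frm.neg (KNI β0 L (Frm.neg
        (Frm.and (Frm.conjBelow (fun l => Frm.prevPow l α) i0)
          (Frm.and
            (Frm.conjBelow (fun l => Frm.neg (Frm.prevPow l (Frm.and α (Frm.neg α)))) (i0 + 1))
            (Frm.prevPow i0 β)))))) T) := by
  by_contra hc
  push_neg at hc
  -- every witness extension is inconsistent, so `T` derives each premise of RS
  have hprem : ∀ i : ℕ, Deriv T (KNI β0 L (Frm.neg
      (Frm.and (Frm.conjBelow (fun l => Frm.prevPow l α) i)
        (Frm.and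
          (Frm.conjBelow (fun l => Frm.neg (Frm.prevPow l (Frm.and α (Frm.neg α)))) (i + 1))
          (Frm.prevPow i β))))) := by
    intro i
    have hinc := not_not.mp (hc i)
    have h1 := ded (hinc (KNI β0 L (Frm.neg
      (Frm.and (Frm.conjBelow (fun l => Frm.prevPow l α) i)
        (Frm.and
          (Frm.conjBelow (fun l => Frm.neg (Frm.prevPow l (Frm.and α (Frm.neg α)))) (i + 1))
          (Frm.prevPow i β))))))
    exact Deriv.mp (Deriv.tauto (taut_negelim _)) h1
  have hS : Deriv T (KNI β0 L (Frm.neg (Frm.since α β))) := Deriv.ruleSince hprem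
  have hinc := not_not.mp h
  exact hT (fun φ => Deriv.mp (ded (hinc φ)) hS)

end PTEL
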